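/- Let M be a [0,1]-module with a countable dual basis (e_i, φ_i)_{i∈I} such that e_i ≠ 0 and φ_i ≠ 0 for every i ∈ I. Define i ≈ j iff φ_j(e_i) ≠ 0; this is an equivalence relation on I. Let J ⊆ I contain exactly one representative of each ≈-class, and for i ∈ I let ρ(i) ∈ J denote the representative of the class of i. Then for every x ∈ M there exists a unique function r : J → [0,∞) such that φ_i(x) = r(ρ(i))·φ_i(e_{ρ(i)}) (as real numbers) for every i ∈ I. (This expresses each x ∈ M uniquely as a combination x = ∑_{j∈J} r(j)·e_j of the family (e_j)_{j∈J} with nonnegative real coefficients.) -/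

import Mathlib

/-- A Σ-monoid: a set with a partial countable sum, represented via `Option`. -/
structure SigmaMonoid (M : Type) where
  zero : M
  sum : (ℕ → M) → Option M
  sum_unit : ∀ (x : ℕ → M) (j : ℕ), (∀ i, i ≠ j → x i = zero) → sum x = some (x j)
  sum_perm : ∀ (I J : Set ℕ) (σ : ↥(Iᶜ) ≃ ↥(Jᶜ)) (x y : ℕ → M),
      (∀ i ∈ I, x i = zero) → (∀ j ∈ J, y j = zero) →
      (∀ i : ↥(Iᶜ), x i.1 = y (σ i).1) → sum x = sum y
  sum_assoc : ∀ (σ : ℕ × ℕ ≃ ℕ) (x s : ℕ → M),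
      (∀ j, sum (fun k => x (σ (j, k))) = some (s j)) → sum x = sum s
  sum_assoc_inner : ∀ (σ : ℕ × ℕ ≃ ℕ) (x : ℕ → M) (v : M),
      sum x = some v → ∀ j, ∃ w, sum (fun k => x (σ (j, k))) = some w

/-- The (partial) binary sum `x + y`, i.e. the sum of the family `(x, y, 0, 0, …)`. -/
def SigmaMonoid.add {M : Type} (S : SigmaMonoid M) (x y : M) : Option M :=
  S.sum (fun n => if n = 0 then x else if n = 1 then y else S.zero)

/-- A Σ-monoid homomorphism. -/
def SigmaHom {M N : Type} (S : SigmaMonoid M) (T : SigmaMonoid N) (f : M → N) : Prop :=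
  f S.zero = T.zero ∧
  ∀ (x : ℕ → M) (v : M), S.sum x = some v → T.sum (fun i => f (x i)) = some (f v)

/-- A Σ-semiring: a Σ-monoid with a total commutative multiplication distributing
over the partial sums. -/
structure SigmaSemiring (R : Type) extends SigmaMonoid R where
  one : R
  mul : R → R → R
  mul_assoc' : ∀ a b c, mul (mul a b) c = mul a (mul b c)
  mul_comm' : ∀ a b, mul a b = mul b a
  one_mul' : ∀ a, mul one a = a
  zero_mul' : ∀ a, mul zero a = zero
  mul_sum : ∀ (e : ℕ ≃ ℕ × ℕ) (r s : ℕ → R) (a b : R),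
      sum r = some a → sum s = some b →
      sum (fun n => mul (r (e n).1) (s (e n).2)) = some (mul a b)

/-- A module over a Σ-semiring. -/
structure SigmaModule (R : Type) (S : SigmaSemiring R) (M : Type) extends SigmaMonoid M where
  smul : R → M → M
  one_smul' : ∀ x, smul S.one x = x
  mul_smul' : ∀ r s x, smul (S.mul r s) x = smul r (smul s x)
  zero_smul' : ∀ x, smul S.zero x = zero
  smul_zero' : ∀ r, smul r zero = zero
  smul_sum : ∀ (e : ℕ ≃ ℕ × ℕ) (r : ℕ → R) (x : ℕ → M) (a : R) (b : M),
      S.sum r = some a → sum x = some b →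
      sum (fun n => smul (r (e n).1) (x (e n).2)) = some (smul a b)

/-- An `R`-linear map between `R`-modules. -/
def RLinear {R M N : Type} (S : SigmaSemiring R)
    (MM : SigmaModule R S M) (NN : SigmaModule R S N) (f : M → N) : Prop :=
  f MM.zero = NN.zero ∧
  (∀ (x : ℕ → M) (v : M), MM.sum x = some v → NN.sum (fun i => f (x i)) = some (f v)) ∧
  (∀ r x, f (MM.smul r x) = NN.smul r (f x))

/-- The unit interval `[0,1]`, as a subtype of the nonnegative reals. -/
def UnitI : Type := {r : NNReal // r ≤ 1}

def uZero : UnitI := ⟨0, zero_le_one⟩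

def uOne : UnitI := ⟨1, le_refl 1⟩

def uMul (a b : UnitI) : UnitI :=
  ⟨a.1 * b.1, by
    calc a.1 * b.1 ≤ 1 * 1 := mul_le_mul' a.2 b.2
    _ = 1 := one_mul 1⟩

open Classical in
/-- The partial sum on `[0,1]`: `Σ_i r_i` is defined iff the series converges
to a value `≤ 1`, in which case that value is the sum. -/
noncomputable def uSum (r : ℕ → UnitI) : Option UnitI :=
  if h : (∑' i, ((r i).1 : ENNReal)) ≤ 1 then
    some ⟨(∑' i, ((r i).1 : ENNReal)).toNNReal, by
      have hne : (∑' i, ((r i).1 : ENNReal)) ≠ ⊤ :=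
        ne_top_of_le_ne_top ENNReal.one_ne_top h
      exact ENNReal.coe_le_coe.mp
        (by rw [ENNReal.coe_toNNReal hne]; exact_mod_cast h)⟩
  else none

open Classical in
/-- `sumIdx S f v` says that the sum of the countable family `f`, taken along
an enumeration of its index set padded with zeros (which is independent of the
enumeration by the permutation axiom), is defined and equals `v`. -/
def sumIdx {M : Type} (S : SigmaMonoid M) {ι : Type} (f : ι → M) (v : M) : Prop :=
  ∃ e : ι ↪ ℕ,
    S.sum (fun n => if h : ∃ i, e i = n then f h.choose else S.zero) = some v

/-- A `[0,1]`-linear map from a `[0,1]`-module to `[0,1]` itself. -/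
def UnitLinearMap (U : SigmaSemiring UnitI) {M : Type}
    (MM : SigmaModule UnitI U M) (φ : M → UnitI) : Prop :=
  φ MM.zero = U.zero ∧
  (∀ (x : ℕ → M) (v : M), MM.sum x = some v →
    U.sum (fun i => φ (x i)) = some (φ v)) ∧
  (∀ (r : UnitI) (x : M), φ (MM.smul r x) = U.mul r (φ x))

/-- A countable dual basis `(e_i, φ_i)_{i ∈ ι}` of a `[0,1]`-module:
each `φ_i` is `[0,1]`-linear and `x = Σ_{i∈ι} φ_i(x)·e_i` for every `x`. -/
def IsDualBasis (U : SigmaSemiring UnitI) {M ι : Type}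
    (MM : SigmaModule UnitI U M) (e : ι → M) (φ : ι → M → UnitI) : Prop :=
  (∀ i, UnitLinearMap U MM (φ i)) ∧
  ∀ x : M, sumIdx MM.toSigmaMonoid (fun i => MM.smul (φ i x) (e i)) x

open scoped ENNReal

private lemma tsum_ptwise_eq {ι : Type} {g h : ι → ℝ≥0∞} (hle : ∀ i, g i ≤ h i)
    (hsum : ∑' i, h i ≤ ∑' i, g i) (hfin : (∑' i, g i) ≠ ⊤) : ∀ i, g i = h i := by
  intro i
  by_contra hne
  exact absurd (lt_of_lt_of_le (ENNReal.tsum_lt_tsum hfin hle (lt_of_le_of_ne (hle i) hne)) hsum)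
    (lt_irrefl _)

private lemma ennreal_cancel {c x y : ℝ≥0∞} (hc : c ≠ 0) (hc' : c ≠ ⊤) (h : x * c = y * c) :
    x = y := by
  have h2 := congrArg (fun z => z * c⁻¹) h
  simpa [mul_assoc, ENNReal.mul_inv_cancel hc hc'] using h2

private lemma matrix_key {ι : Type} (a : ι → ι → ℝ≥0∞) (f : ι → ℝ≥0∞)
    (ha1 : ∀ k i, a k i ≤ 1)
    (hAA : ∀ k m, ∑' l, a l m * a k l = a k m)
    (hAf : ∀ k, ∑' l, f l * a k l = f k)
    (j i : ι) (hpp : a j j ≠ 0) (hji : a j i ≠ 0) :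
    a j j * f i = a i j * f j := by
  classical
  have hfin : ∀ k m, a k m ≠ ⊤ := fun k m => ne_top_of_le_ne_top ENNReal.one_ne_top (ha1 k m)
  -- the kernel K m k' = a k' m * a j k' / a j m  (stochastic on the support of row j)
  set K : ι → ι → ℝ≥0∞ := fun m k' => a k' m * a j k' * (a j m)⁻¹ with hKdef
  have hKzero : ∀ m k', a j k' = 0 → K m k' = 0 := by
    intro m k' h
    show a k' m * a j k' * (a j m)⁻¹ = 0
    rw [h, mul_zero, zero_mul]
  have hrow : ∀ m, a j m ≠ 0 → ∑' k', K m k' = 1 := by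
    intro m hm
    show ∑' k', a k' m * a j k' * (a j m)⁻¹ = 1
    rw [ENNReal.tsum_mul_right, hAA j m, ENNReal.mul_inv_cancel hm (hfin j m)]
  have hKle1 : ∀ m k', a j m ≠ 0 → K m k' ≤ 1 := by
    intro m k' hm
    rw [← hrow m hm]
    exact ENNReal.le_tsum k'
  have hKj : ∀ m, a j m ≠ 0 → K m j = a j j := by
    intro m hm
    show a j m * a j j * (a j m)⁻¹ = a j j
    calc a j m * a j j * (a j m)⁻¹ = a j j * (a j m * (a j m)⁻¹) := by ring
      _ = a j j := by rw [ENNReal.mul_inv_cancel hm (hfin j m), mul_one]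
  -- idempotency of K
  have hK2 : ∀ m, a j m ≠ 0 → ∀ k', ∑' l, K m l * K l k' = K m k' := by
    intro m hm
    have hle2 : ∀ k', ∑' l, K m l * K l k' ≤ K m k' := by
      intro k'
      have hle : ∀ l, K m l * K l k' ≤ (a k' l * a l m) * (a j k' * (a j m)⁻¹) := by
        intro l
        by_cases hl : a j l = 0
        · rw [hKzero m l hl, zero_mul]; exact zero_le
        · apply le_of_eq
          show a l m * a j l * (a j m)⁻¹ * (a k' l * a j k' * (a j l)⁻¹) = _
          calc a l m * a j l * (a j m)⁻¹ * (a k' l * a j k' * (a j l)⁻¹)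
              = ((a k' l * a l m) * (a j k' * (a j m)⁻¹)) * (a j l * (a j l)⁻¹) := by ring
            _ = (a k' l * a l m) * (a j k' * (a j m)⁻¹) := by
                rw [ENNReal.mul_inv_cancel hl (hfin j l), mul_one]
      calc ∑' l, K m l * K l k' ≤ ∑' l, (a k' l * a l m) * (a j k' * (a j m)⁻¹) :=
            Summable.tsum_le_tsum hle ENNReal.summable ENNReal.summable
        _ = (∑' l, a l m * a k' l) * (a j k' * (a j m)⁻¹) := by
            rw [← ENNReal.tsum_mul_right]
            exact tsum_congr fun l => by ring
        _ = K m k' := by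
            rw [hAA k' m]
            show _ = a k' m * a j k' * (a j m)⁻¹
            ring
    have htot : ∑' k', ∑' l, K m l * K l k' = 1 := by
      rw [ENNReal.tsum_comm]
      have hl : ∀ l, ∑' k', K m l * K l k' = K m l := by
        intro l
        rw [ENNReal.tsum_mul_left]
        by_cases hl0 : a j l = 0
        · rw [hKzero m l hl0, zero_mul]
        · rw [hrow l hl0, mul_one]
      rw [tsum_congr hl, hrow m hm]
    intro k'
    refine tsum_ptwise_eq (g := fun k' => ∑' l, K m l * K l k') (h := fun k' => K m k') hle2 ?_ ?_ k'
    · rw [htot, hrow m hm]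
    · rw [htot]; exact ENNReal.one_ne_top
  -- all rows of K on the support of row j are equal to row j of K
  have hrows : ∀ m, a j m ≠ 0 → ∀ k', K m k' = K j k' := by
    intro m hm k'
    set s := ⨆ l : {l // a j l ≠ 0}, K l.1 k' with hs
    set t := ⨅ l : {l // a j l ≠ 0}, K l.1 k' with ht
    have hs1 : s ≤ 1 := iSup_le fun l => hKle1 l.1 k' l.2
    have hsfin : s ≠ ⊤ := ne_top_of_le_ne_top ENNReal.one_ne_top hs1
    have htfin : t ≠ ⊤ := by
      have : t ≤ s := le_trans (iInf_le _ ⟨j, hpp⟩) (le_iSup (fun l : {l // a j l ≠ 0} => K l.1 k') ⟨j, hpp⟩)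
      exact ne_top_of_le_ne_top hsfin this
    have hdec : ∀ m', a j m' ≠ 0 →
        K m' k' = a j j * K j k' + ∑' l, if l = j then 0 else K m' l * K l k' := by
      intro m' hm'
      conv_lhs => rw [← hK2 m' hm' k']
      rw [ENNReal.tsum_eq_add_tsum_ite j, hKj m' hm']
    have hoff : ∀ m', a j m' ≠ 0 → ∑' l, (if l = j then 0 else K m' l) = 1 - a j j := by
      intro m' hm'
      have h1 : K m' j + ∑' l, (if l = j then 0 else K m' l) = 1 := by
        rw [← ENNReal.tsum_eq_add_tsum_ite j, hrow m' hm']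
      rw [hKj m' hm', add_comm] at h1
      exact ENNReal.eq_sub_of_add_eq (hfin j j) h1
    have hup : ∀ m', a j m' ≠ 0 → K m' k' ≤ a j j * K j k' + (1 - a j j) * s := by
      intro m' hm'
      rw [hdec m' hm']
      refine add_le_add_right ?_ _
      calc ∑' l, (if l = j then 0 else K m' l * K l k')
          ≤ ∑' l, (if l = j then 0 else K m' l) * s := by
            refine Summable.tsum_le_tsum ?_ ENNReal.summable ENNReal.summable
            intro l
            by_cases hlj : l = j
            · simp [hlj]
            · simp only [hlj, if_false]
              by_cases hl : a j l = 0
              · rw [hKzero m' l hl, zero_mul, zero_mul]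
              · exact mul_le_mul_right (le_iSup (fun u : {l // a j l ≠ 0} => K u.1 k') ⟨l, hl⟩) _
        _ = (1 - a j j) * s := by rw [ENNReal.tsum_mul_right, hoff m' hm']
    have hdn : ∀ m', a j m' ≠ 0 → a j j * K j k' + (1 - a j j) * t ≤ K m' k' := by
      intro m' hm'
      rw [hdec m' hm']
      refine add_le_add_right ?_ _
      calc (1 - a j j) * t = ∑' l, (if l = j then 0 else K m' l) * t := by
            rw [ENNReal.tsum_mul_right, hoff m' hm']
        _ ≤ ∑' l, (if l = j then 0 else K m' l * K l k') := by
            refine Summable.tsum_le_tsum ?_ ENNReal.summable ENNReal.summable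
            intro l
            by_cases hlj : l = j
            · simp [hlj]
            · simp only [hlj, if_false]
              by_cases hl : a j l = 0
              · rw [hKzero m' l hl, zero_mul, zero_mul]
              · exact mul_le_mul_right (iInf_le (fun u : {l // a j l ≠ 0} => K u.1 k') ⟨l, hl⟩) _
    have hone_split : a j j + (1 - a j j) = 1 := add_tsub_cancel_of_le (ha1 j j)
    have h1ps_fin : (1 - a j j) * s ≠ ⊤ :=
      ne_top_of_le_ne_top ENNReal.one_ne_top (mul_le_one' tsub_le_self hs1)
    have h1pt_fin : (1 - a j j) * t ≠ ⊤ :=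
      ne_top_of_le_ne_top (by simpa using ENNReal.mul_ne_top (by simp) htfin) le_rfl
    have hsν : s ≤ K j k' := by
      have hsup : s ≤ a j j * K j k' + (1 - a j j) * s := iSup_le fun l => hup l.1 l.2
      have hsplit : a j j * s + (1 - a j j) * s = s := by
        rw [← add_mul, hone_split, one_mul]
      have h2 : a j j * s + (1 - a j j) * s ≤ a j j * K j k' + (1 - a j j) * s :=
        le_trans (le_of_eq hsplit) hsup
      have h3 : a j j * s ≤ a j j * K j k' := (ENNReal.add_le_add_iff_right h1ps_fin).mp h2
      exact (ENNReal.mul_le_mul_iff_right hpp (hfin j j)).mp h3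
    have hνt : K j k' ≤ t := by
      have hinf : a j j * K j k' + (1 - a j j) * t ≤ t := le_iInf fun l => hdn l.1 l.2
      have hsplit : t = a j j * t + (1 - a j j) * t := by
        rw [← add_mul, hone_split, one_mul]
      have h2 : a j j * K j k' + (1 - a j j) * t ≤ a j j * t + (1 - a j j) * t :=
        le_trans hinf (le_of_eq hsplit)
      have h3 : a j j * K j k' ≤ a j j * t := (ENNReal.add_le_add_iff_right h1pt_fin).mp h2
      exact (ENNReal.mul_le_mul_iff_right hpp (hfin j j)).mp h3
    have h1 : K m k' ≤ s := le_iSup (fun u : {l // a j l ≠ 0} => K u.1 k') ⟨m, hm⟩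
    have h2 : t ≤ K m k' := iInf_le (fun u : {l // a j l ≠ 0} => K u.1 k') ⟨m, hm⟩
    exact le_antisymm (h1.trans hsν) (hνt.trans h2)
  -- proportionality of rows on the support of row j
  have hP1 : ∀ k' m, a j k' ≠ 0 → a j m ≠ 0 → a j j * a k' m = a k' j * a j m := by
    intro k' m hk' hm
    have h := hrows m hm k'
    -- h : a k' m * a j k' * (a j m)⁻¹ = a k' j * a j k' * (a j j)⁻¹
    have h2 : K m k' * (a j m * a j j) = K j k' * (a j m * a j j) := by rw [h]
    have hL : K m k' * (a j m * a j j) = a k' m * a j k' * a j j := by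
      show a k' m * a j k' * (a j m)⁻¹ * (a j m * a j j) = _
      calc a k' m * a j k' * (a j m)⁻¹ * (a j m * a j j)
          = a k' m * a j k' * a j j * (a j m * (a j m)⁻¹) := by ring
        _ = a k' m * a j k' * a j j := by rw [ENNReal.mul_inv_cancel hm (hfin j m), mul_one]
    have hR : K j k' * (a j m * a j j) = a k' j * a j k' * a j m := by
      show a k' j * a j k' * (a j j)⁻¹ * (a j m * a j j) = _
      calc a k' j * a j k' * (a j j)⁻¹ * (a j m * a j j)
          = a k' j * a j k' * a j m * (a j j * (a j j)⁻¹) := by ring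
        _ = a k' j * a j k' * a j m := by rw [ENNReal.mul_inv_cancel hpp (hfin j j), mul_one]
    rw [hL, hR] at h2
    -- h2 : a k' m * a j k' * a j j = a k' j * a j k' * a j m
    have h3 : (a j j * a k' m) * a j k' = (a k' j * a j m) * a j k' := by
      calc (a j j * a k' m) * a j k' = a k' m * a j k' * a j j := by ring
        _ = a k' j * a j k' * a j m := h2
        _ = (a k' j * a j m) * a j k' := by ring
    exact ennreal_cancel hk' (hfin j k') h3
  -- transitivity: row i is supported in the support of row j
  have htrans : ∀ m, a j m = 0 → a i m = 0 := by
    intro m hm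
    have h0 : ∑' l, a l m * a j l = 0 := by rw [hAA j m, hm]
    have h1 := (ENNReal.tsum_eq_zero.mp h0) i
    rcases mul_eq_zero.mp h1 with h | h
    · exact h
    · exact absurd h hji
  -- conclusion
  calc a j j * f i = a j j * ∑' m, f m * a i m := by rw [hAf i]
    _ = ∑' m, a j j * (f m * a i m) := by rw [ENNReal.tsum_mul_left]
    _ = ∑' m, a i j * (f m * a j m) := by
        refine tsum_congr fun m => ?_
        by_cases hm : a j m = 0
        · rw [hm, htrans m hm]; simp
        · have hpm := hP1 i m hji hm
          calc a j j * (f m * a i m) = f m * (a j j * a i m) := by ring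
            _ = f m * (a i j * a j m) := by rw [hpm]
            _ = a i j * (f m * a j m) := by ring
    _ = a i j * f j := by rw [ENNReal.tsum_mul_left, hAf j]

open scoped ENNReal in
private lemma bridge (U : SigmaSemiring UnitI)
    (hUzero : U.zero = uZero) (hUsum : U.sum = uSum) (hUmul : U.mul = uMul)
    {M ι : Type} (MM : SigmaModule UnitI U M) (e : ι → M) (φ : ι → M → UnitI)
    (hbasis : IsDualBasis U MM e φ) (k : ι) (x : M) :
    ∑' i : ι, (((φ i x).1 : ℝ≥0∞) * ((φ k (e i)).1 : ℝ≥0∞)) = ((φ k x).1 : ℝ≥0∞) := by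
  classical
  obtain ⟨hlin, hexp⟩ := hbasis
  obtain ⟨emb, hsum⟩ := hexp x
  obtain ⟨hz, hhom, hsm⟩ := hlin k
  have h2 := hhom _ _ hsum
  rw [hUsum] at h2
  set G : ℕ → M := fun n =>
    if h : ∃ i, emb i = n then MM.smul (φ h.choose x) (e h.choose)
    else MM.toSigmaMonoid.zero with hGdef
  have h2' : uSum (fun n => φ k (G n)) = some (φ k x) := h2
  unfold uSum at h2'
  split_ifs at h2' with hle
  · have h3 : (⟨(∑' n : ℕ, ((φ k (G n)).1 : ENNReal)).toNNReal, _⟩ : UnitI) = φ k x :=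
      Option.some.inj h2'
    have hne : (∑' n : ℕ, ((φ k (G n)).1 : ENNReal)) ≠ ⊤ :=
      ne_top_of_le_ne_top ENNReal.one_ne_top hle
    have h4 : (∑' n : ℕ, ((φ k (G n)).1 : ℝ≥0∞)) = ((φ k x).1 : ℝ≥0∞) := by
      rw [← ENNReal.coe_toNNReal hne]
      exact_mod_cast congrArg (fun u : UnitI => u.1) h3
    set F : ℕ → ℝ≥0∞ := fun n => ((φ k (G n)).1 : ℝ≥0∞) with hFdef
    have hsupp : Function.support F ⊆ Set.range emb := by
      intro n hn
      by_contra hr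
      apply hn
      have hnex : ¬ ∃ i, emb i = n := fun ⟨i, hi⟩ => hr ⟨i, hi⟩
      have hGn : G n = MM.toSigmaMonoid.zero := by
        rw [hGdef]; exact dif_neg hnex
      have hzz : φ k (G n) = uZero := by rw [hGn, ← hUzero]; exact hz
      show F n = 0
      rw [hFdef]
      simp only [hzz]
      norm_num [uZero]
    have hterm : ∀ i : ι, F (emb i) = ((φ i x).1 : ℝ≥0∞) * ((φ k (e i)).1 : ℝ≥0∞) := by
      intro i
      have hex : ∃ i', emb i' = emb i := ⟨i, rfl⟩
      have hch : hex.choose = i := emb.injective hex.choose_spec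
      have hG : G (emb i) = MM.smul (φ i x) (e i) := by
        rw [hGdef]
        show (if h : ∃ i', emb i' = emb i then MM.smul (φ h.choose x) (e h.choose)
          else MM.toSigmaMonoid.zero) = _
        rw [dif_pos hex, hch]
      have hmm : φ k (G (emb i)) = uMul (φ i x) (φ k (e i)) := by
        rw [hG, hsm (φ i x) (e i), hUmul]
      show F (emb i) = _
      rw [hFdef]
      simp only [hmm]
      show (((φ i x).1 * (φ k (e i)).1 : NNReal) : ℝ≥0∞) = _
      push_cast
      rfl
    calc ∑' i : ι, (((φ i x).1 : ℝ≥0∞) * ((φ k (e i)).1 : ℝ≥0∞))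
        = ∑' i : ι, F (emb i) := tsum_congr fun i => (hterm i).symm
      _ = ∑' n : ℕ, F n := emb.injective.tsum_eq hsupp
      _ = ((φ k x).1 : ℝ≥0∞) := h4

/-- In a `[0,1]`-module with a countable dual basis (with nonzero basis vectors
and nonzero coordinate functionals), fixing a set `J` of representatives of the
equivalence relation `i ≈ j iff φ_j(e_i) ≠ 0` (with `ρ i` the representative of
the class of `i`), every element `x` has a unique family of nonnegative real
coefficients `r : J → [0,∞)` with `φ_i(x) = r(ρ i)·φ_i(e_{ρ i})` for all `i`. -/
theorem stmt17 (U : SigmaSemiring UnitI)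
    (hUzero : U.zero = uZero) (hUone : U.one = uOne)
    (hUsum : U.sum = uSum) (hUmul : U.mul = uMul)
    {M ι : Type} [Countable ι]
    (MM : SigmaModule UnitI U M)
    (e : ι → M) (φ : ι → M → UnitI)
    (hbasis : IsDualBasis U MM e φ)
    (he0 : ∀ i, e i ≠ MM.zero)
    (hφ0 : ∀ i, φ i ≠ fun _ => U.zero)
    (J : Set ι) (ρ : ι → ι)
    (hρ : ∀ i, ρ i ∈ J ∧ φ (ρ i) (e i) ≠ U.zero)
    (hone : ∀ j ∈ J, ∀ j' ∈ J, φ j' (e j) ≠ U.zero → j = j')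
    (x : M) :
    ∃! r : {j : ι // j ∈ J} → NNReal,
      ∀ i : ι, (φ i x).1 = r ⟨ρ i, (hρ i).1⟩ * (φ i (e (ρ i))).1 := by
  classical
  have hbr : ∀ (k : ι) (y : M),
      ∑' i : ι, (((φ i y).1 : ℝ≥0∞) * ((φ k (e i)).1 : ℝ≥0∞)) = ((φ k y).1 : ℝ≥0∞) :=
    fun k y => bridge U hUzero hUsum hUmul MM e φ hbasis k y
  set a : ι → ι → ℝ≥0∞ := fun k i => ((φ k (e i)).1 : ℝ≥0∞) with hadef
  set f : ι → ℝ≥0∞ := fun k => ((φ k x).1 : ℝ≥0∞) with hfdef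
  have hAA : ∀ k m, ∑' l, a l m * a k l = a k m := fun k m => hbr k (e m)
  have hAf : ∀ k, ∑' l, f l * a k l = f k := fun k => hbr k x
  have ha1 : ∀ k i, a k i ≤ 1 := fun k i => by
    show ((φ k (e i)).1 : ℝ≥0∞) ≤ 1
    exact_mod_cast (φ k (e i)).2
  have hUz : ∀ u : UnitI, u ≠ U.zero → ((u.1 : ℝ≥0∞)) ≠ 0 := by
    intro u hu h0
    apply hu
    rw [hUzero]
    exact Subtype.ext (by exact_mod_cast h0)
  have hρfix : ∀ j, j ∈ J → ρ j = j := fun j hj => (hone j hj (ρ j) (hρ j).1 (hρ j).2).symm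
  have hjj : ∀ i : ι, a (ρ i) (ρ i) ≠ 0 := by
    intro i
    have h1 : ρ (ρ i) = ρ i := hρfix (ρ i) (hρ i).1
    have h2 := (hρ (ρ i)).2
    rw [h1] at h2
    exact hUz _ h2
  have hji : ∀ i : ι, a (ρ i) i ≠ 0 := fun i => hUz _ (hρ i).2
  have hkey : ∀ i : ι, a (ρ i) (ρ i) * f i = a i (ρ i) * f (ρ i) :=
    fun i => matrix_key a f ha1 hAA hAf (ρ i) i (hjj i) (hji i)
  have hkeyN : ∀ i : ι,
      (φ (ρ i) (e (ρ i))).1 * (φ i x).1 = (φ i (e (ρ i))).1 * (φ (ρ i) x).1 := by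
    intro i
    have h := hkey i
    have h' : (((φ (ρ i) (e (ρ i))).1 * (φ i x).1 : NNReal) : ℝ≥0∞)
        = (((φ i (e (ρ i))).1 * (φ (ρ i) x).1 : NNReal) : ℝ≥0∞) := by
      push_cast
      exact h
    exact_mod_cast h'
  have hp0 : ∀ i : ι, (φ (ρ i) (e (ρ i))).1 ≠ 0 := by
    intro i h0
    exact hjj i (by show ((φ (ρ i) (e (ρ i))).1 : ℝ≥0∞) = 0; exact_mod_cast h0)
  refine ⟨fun jj => (φ jj.1 x).1 * ((φ jj.1 (e jj.1)).1)⁻¹, ?_, ?_⟩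
  · intro i
    show (φ i x).1 = (φ (ρ i) x).1 * ((φ (ρ i) (e (ρ i))).1)⁻¹ * (φ i (e (ρ i))).1
    have h := hkeyN i
    have hp := hp0 i
    calc (φ i x).1
        = ((φ (ρ i) (e (ρ i))).1 * (φ i x).1) * ((φ (ρ i) (e (ρ i))).1)⁻¹ := by
          rw [mul_comm ((φ (ρ i) (e (ρ i))).1) ((φ i x).1), mul_assoc,
            mul_inv_cancel₀ hp, mul_one]
      _ = ((φ i (e (ρ i))).1 * (φ (ρ i) x).1) * ((φ (ρ i) (e (ρ i))).1)⁻¹ := by rw [h]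
      _ = (φ (ρ i) x).1 * ((φ (ρ i) (e (ρ i))).1)⁻¹ * (φ i (e (ρ i))).1 := by ring
  · intro r' hr'
    funext jj
    obtain ⟨j, hj⟩ := jj
    have hfix : ρ j = j := hρfix j hj
    have h := hr' j
    have hsub : (⟨ρ j, (hρ j).1⟩ : {j : ι // j ∈ J}) = ⟨j, hj⟩ := Subtype.ext hfix
    rw [hsub] at h
    rw [hfix] at h
    have hp : (φ j (e j)).1 ≠ 0 := by
      have h2 := hp0 j
      rw [hfix] at h2
      exact h2
    show r' ⟨j, hj⟩ = (φ j x).1 * ((φ j (e j)).1)⁻¹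
    rw [h, mul_assoc, mul_inv_cancel₀ hp, mul_one]
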